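/- Let P_p = ⟨{φ}, χ, H, E, p⟩ be a PrAP and let τ be an L_CPL-term composed of literals from H. Then τ is a solution to P_p if and only if the set Ξ_p ∪ {¬△¬Pr(φ∧τ)} is FP-satisfiable (i.e., Ξ_p, ¬△¬Pr(φ∧τ) ⊭_FP ⊥) and FP ⊨ Pr(φ∧τ) → Pr(χ). -/

import Mathlib

open scoped Classical

/-- Classical propositional formulas (the language `L_CPL`), built from
propositional variables (indexed by `ℕ`) using ¬, ∧, ∨. -/
inductive CPL where
  | var : ℕ → CPL
  | neg : CPL → CPL
  | and : CPL → CPL → CPL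
  | or : CPL → CPL → CPL
deriving DecidableEq

namespace CPL

/-- The set of propositional variables occurring in a formula. -/
def vars : CPL → Finset ℕ
  | var p => {p}
  | neg φ => vars φ
  | and φ χ => vars φ ∪ vars χ
  | or φ χ => vars φ ∪ vars χ

/-- Classical evaluation of a formula under a Boolean valuation. -/
def eval (v : ℕ → Bool) : CPL → Bool
  | var p => v p
  | neg φ => !eval v φ
  | and φ χ => eval v φ && eval v χ
  | or φ χ => eval v φ || eval v χ

/-- Evaluation of a formula at a state given as a set of variables:
the variables in `X` are true, all others false. -/
def evalSet (X : Finset ℕ) (φ : CPL) : Bool := eval (fun p => decide (p ∈ X)) φ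

/-- CPL-satisfiability. -/
def Satisfiable (φ : CPL) : Prop := ∃ v, eval v φ = true

/-- CPL-validity. -/
def Valid (φ : CPL) : Prop := ∀ v, eval v φ = true

/-- Classical entailment `φ ⊨_CPL χ`. -/
def Entails (φ χ : CPL) : Prop := ∀ v, eval v φ = true → eval v χ = true

/-- A literal: a variable or a negated variable. -/
def IsLiteral (φ : CPL) : Prop := (∃ p, φ = var p) ∨ ∃ p, φ = neg (var p)

/-- An `L_CPL`-term: a conjunction of literals. -/
inductive IsTerm : CPL → Prop
  | lit {φ} : IsLiteral φ → IsTerm φ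
  | conj {φ χ} : IsTerm φ → IsTerm χ → IsTerm (and φ χ)

/-- A conjunction of propositional variables. -/
inductive IsConjVars : CPL → Prop
  | var (p : ℕ) : IsConjVars (var p)
  | conj {φ χ} : IsConjVars φ → IsConjVars χ → IsConjVars (and φ χ)

/-- A disjunction of propositional variables. -/
inductive IsDisjVars : CPL → Prop
  | var (p : ℕ) : IsDisjVars (var p)
  | disj {φ χ} : IsDisjVars φ → IsDisjVars χ → IsDisjVars (or φ χ)

/-- Variables occurring as positive literals (in a term). -/
def posVars : CPL → Finset ℕ
  | var p => {p}
  | neg _ => ∅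
  | and φ χ => posVars φ ∪ posVars χ
  | or _ _ => ∅

/-- Variables occurring as negated literals (in a term). -/
def negVars : CPL → Finset ℕ
  | var _ => ∅
  | neg (var p) => {p}
  | neg _ => ∅
  | and φ χ => negVars φ ∪ negVars χ
  | or _ _ => ∅

/-- The literals occurring in a term. -/
def lits (φ : CPL) : Finset CPL :=
  (posVars φ).image var ∪ (negVars φ).image (fun p => neg (var p))

end CPL

/-- A state (possible world) over a finite set `V` of variables: a subset of `V`. -/
abbrev World (V : Finset ℕ) := {X : Finset ℕ // X ⊆ V}

/-- A probabilistic model for `V`: a finitely additive probability measure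
`μ : 2^(2^V) → [0,1]`. -/
structure ProbModel (V : Finset ℕ) where
  μ : Set (World V) → ℝ
  nonneg : ∀ A, 0 ≤ μ A
  le_one : ∀ A, μ A ≤ 1
  m_univ : μ Set.univ = 1
  m_empty : μ ∅ = 0
  m_add : ∀ A B : Set (World V), Disjoint A B → μ (A ∪ B) = μ A + μ B

/-- The truth set `‖φ‖_M` of a classical formula in a probabilistic model for `V`. -/
def truthSet (V : Finset ℕ) (φ : CPL) : Set (World V) :=
  {w | CPL.evalSet w.1 φ = true}

/-- Comparison symbols ◇ ∈ {≤, <, >, ≥}. -/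
inductive Ineq where
  | le | lt | gt | ge
deriving DecidableEq

/-- The relation denoted by a comparison symbol. -/
def Ineq.holds : Ineq → ℝ → ℝ → Prop
  | le, x, c => x ≤ c
  | lt, x, c => x < c
  | gt, x, c => x > c
  | ge, x, c => x ≥ c

/-- Formulas of the probabilistic language `L^Q_Pr`, built from probabilistic atoms
`Pr(φ)` and `Pr(φ)◇c̄` using ¬, △, ⊙, ⊕, →. -/
inductive FP where
  | prob : CPL → FP
  | probIneq : CPL → Ineq → ℚ → FP
  | neg : FP → FP
  | delta : FP → FP
  | conj : FP → FP → FP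
  | disj : FP → FP → FP
  | impl : FP → FP → FP
deriving DecidableEq

namespace FP

/-- Well-formedness: all rational constants lie in `[0,1] ∩ ℚ`. -/
def WF : FP → Prop
  | prob _ => True
  | probIneq _ _ c => 0 ≤ c ∧ c ≤ 1
  | neg α => WF α
  | delta α => WF α
  | conj α β => WF α ∧ WF β
  | disj α β => WF α ∧ WF β
  | impl α β => WF α ∧ WF β

/-- The variables of an `L^Q_Pr`-formula. -/
def vars : FP → Finset ℕ
  | prob φ => φ.vars
  | probIneq φ _ _ => φ.vars
  | neg α => vars α
  | delta α => vars α
  | conj α β => vars α ∪ vars β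
  | disj α β => vars α ∪ vars β
  | impl α β => vars α ∪ vars β

/-- The events `E(α)`: the classical formulas occurring in probabilistic atoms of `α`. -/
def events : FP → Finset CPL
  | prob φ => {φ}
  | probIneq φ _ _ => {φ}
  | neg α => events α
  | delta α => events α
  | conj α β => events α ∪ events β
  | disj α β => events α ∪ events β
  | impl α β => events α ∪ events β

/-- The FP-interpretation `I_M` induced by a probabilistic model `M`. -/
noncomputable def interp {V : Finset ℕ} (M : ProbModel V) : FP → ℝ
  | prob φ => M.μ (truthSet V φ)
  | probIneq φ d c => if d.holds (M.μ (truthSet V φ)) (c : ℝ) then 1 else 0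
  | neg α => 1 - interp M α
  | delta α => if interp M α = 1 then 1 else 0
  | conj α β => max 0 (interp M α + interp M β - 1)
  | disj α β => min 1 (interp M α + interp M β)
  | impl α β => min 1 (1 - interp M α + interp M β)

/-- `α` is FP-satisfiable: `I_M(α) = 1` in some probabilistic model for `Var(α)`. -/
def Satisfiable (α : FP) : Prop := ∃ M : ProbModel α.vars, interp M α = 1

/-- `α` is FP-valid: `I_M(α) = 1` in every probabilistic model for `Var(α)`. -/
def Valid (α : FP) : Prop := ∀ M : ProbModel α.vars, interp M α = 1

/-- `α ⊨_FP β`: `I_M(β) = 1` in every probabilistic model for the variables of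
`{α, β}` with `I_M(α) = 1`. -/
def Entails1 (α β : FP) : Prop :=
  ∀ M : ProbModel (α.vars ∪ β.vars), interp M α = 1 → interp M β = 1

/-- The variables of a finite set of `L^Q_Pr`-formulas. -/
def varsSet (Γ : Finset FP) : Finset ℕ := Γ.sup vars

/-- A finite set `Γ` is FP-satisfiable (`Γ ⊭_FP ⊥`): some probabilistic model for
the variables of `Γ` makes every member of `Γ` equal to `1`. -/
def SetSatisfiable (Γ : Finset FP) : Prop :=
  ∃ M : ProbModel (varsSet Γ), ∀ γ ∈ Γ, interp M γ = 1

/-- `Γ ⊨_FP δ`: every probabilistic model for the variables of `Γ ∪ {δ}` satisfying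
all of `Γ` satisfies `δ`. -/
def EntailsFin (Γ : Finset FP) (δ : FP) : Prop :=
  ∀ M : ProbModel (varsSet Γ ∪ δ.vars), (∀ γ ∈ Γ, interp M γ = 1) → interp M δ = 1

/-- `Γ ⊨^cons_FP δ`: `Γ ⊨_FP δ` and `Γ ⊭_FP ⊥`. -/
def ConsEntails (Γ : Finset FP) (δ : FP) : Prop :=
  EntailsFin Γ δ ∧ SetSatisfiable Γ

/-- The set of permitted values `V_Pr(Pr(φ)◇c̄)`. -/
def permittedValues (φ : CPL) (d : Ineq) (c : ℚ) : Set ℝ :=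
  {x | ∃ (V : Finset ℕ) (M : ProbModel V), φ.vars ⊆ V ∧
      interp M (probIneq φ d c) = 1 ∧ M.μ (truthSet V φ) = x}

end FP

/-- Formulas of the Łukasiewicz language `L^Q_Ł`, built from propositional variables
and truth-constant literals `p◇c̄` using ¬, △, ⊙, ⊕, →. -/
inductive Luk where
  | var : ℕ → Luk
  | ineq : ℕ → Ineq → ℚ → Luk
  | neg : Luk → Luk
  | delta : Luk → Luk
  | conj : Luk → Luk → Luk
  | disj : Luk → Luk → Luk
  | impl : Luk → Luk → Luk
deriving DecidableEq

/-- An Ł-valuation: a function `Var → [0,1]`. -/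
structure LukVal where
  v : ℕ → ℝ
  mem : ∀ p, v p ∈ Set.Icc (0 : ℝ) 1

/-- Extension of an Ł-valuation to all `L^Q_Ł`-formulas. -/
noncomputable def LukVal.eval (val : LukVal) : Luk → ℝ
  | .var p => val.v p
  | .ineq p d c => if d.holds (val.v p) (c : ℝ) then 1 else 0
  | .neg φ => 1 - val.eval φ
  | .delta φ => if val.eval φ = 1 then 1 else 0
  | .conj φ χ => max 0 (val.eval φ + val.eval χ - 1)
  | .disj φ χ => min 1 (val.eval φ + val.eval χ)
  | .impl φ χ => min 1 (1 - val.eval φ + val.eval χ)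

namespace Luk

/-- Well-formedness: all rational constants lie in `[0,1] ∩ ℚ`. -/
def WF : Luk → Prop
  | var _ => True
  | ineq _ _ c => 0 ≤ c ∧ c ≤ 1
  | neg φ => WF φ
  | delta φ => WF φ
  | conj φ χ => WF φ ∧ WF χ
  | disj φ χ => WF φ ∧ WF χ
  | impl φ χ => WF φ ∧ WF χ

/-- `Φ ⊨_Ł χ` for a finite set `Φ`. -/
def EntailsFin (Φ : Finset Luk) (χ : Luk) : Prop :=
  ∀ val : LukVal, (∀ φ ∈ Φ, val.eval φ = 1) → val.eval χ = 1

/-- `φ` is Ł-valid. -/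
def ValidL (φ : Luk) : Prop := ∀ val : LukVal, val.eval φ = 1

/-- A set of `L^Q_Ł`-formulas is Ł-satisfiable. -/
def SatisfiableSet (S : Set Luk) : Prop := ∃ val : LukVal, ∀ φ ∈ S, val.eval φ = 1

/-- The probabilistic counterpart `φ^Pr` of a Łukasiewicz formula. -/
def toFP : Luk → FP
  | var p => .prob (.var p)
  | ineq p d c => .probIneq (.var p) d c
  | neg φ => .neg (toFP φ)
  | delta φ => .delta (toFP φ)
  | conj φ χ => .conj (toFP φ) (toFP χ)
  | disj φ χ => .disj (toFP φ) (toFP χ)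
  | impl φ χ => .impl (toFP φ) (toFP χ)

end Luk

namespace FP

/-- The outer counterpart `α^↑` of an `L^Q_Pr`-formula, replacing each atom `Pr(φ)`
by the fresh variable `e φ` (and `Pr(φ)◇c̄` by `(e φ)◇c̄`). -/
def outer (e : CPL → ℕ) : FP → Luk
  | prob φ => .var (e φ)
  | probIneq φ d c => .ineq (e φ) d c
  | neg α => .neg (outer e α)
  | delta α => .delta (outer e α)
  | conj α β => .conj (outer e α) (outer e β)
  | disj α β => .disj (outer e α) (outer e β)
  | impl α β => .impl (outer e α) (outer e β)

end FP

/-- The ⊙-conjunction of a (nonempty) list of `L^Q_Pr`-formulas. -/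
def bigConjFP : List FP → FP
  | [] => .probIneq (.var 0) .ge 0
  | a :: t => t.foldl .conj a

/-- The ∨-disjunction of a (nonempty) list of classical formulas. -/
def bigDisjCPL : List CPL → CPL
  | [] => .var 0
  | a :: t => t.foldl .or a

/-- The PIT `⊙_i Pr(τ_i)≤c̄_i ⊙ ⊙_i Pr(τ_i)≥c̄_i` associated with the list of
pairs `(τ_i, c_i)`. -/
def completePITFormula (L : List (CPL × ℚ)) : FP :=
  bigConjFP (L.map (fun t => FP.probIneq t.1 .le t.2) ++
             L.map (fun t => FP.probIneq t.1 .ge t.2))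

/-- `τ` is an `L_CPL`-term containing, for every `p ∈ V`, exactly one of the
literals `p` and `¬p` (and no other variables). -/
def IsCompleteTermOver (V : Finset ℕ) (τ : CPL) : Prop :=
  CPL.IsTerm τ ∧ τ.vars ⊆ V ∧ ∀ p ∈ V, (p ∈ τ.posVars ↔ p ∉ τ.negVars)

/-- Membership in `𝒱 = {0, 1/n, …, (n−1)/n, 1}`. -/
def memVSet (n : ℕ) (c : ℚ) : Prop := ∃ k : ℕ, k ≤ n ∧ c = (k : ℚ) / (n : ℚ)

/-- The data `(τ_i, c_i)` of a `⟨V,𝒱⟩`-complete PIT (with `𝒱` given by `n`). -/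
def IsCompletePIT (V : Finset ℕ) (n : ℕ) (L : List (CPL × ℚ)) : Prop :=
  (L.map Prod.fst).Nodup ∧
  (∀ t ∈ L, IsCompleteTermOver V t.1 ∧ memVSet n t.2) ∧
  (L.map Prod.snd).sum = 1

/-- A measure is coherent with a value assignment `pr` on the events `E`. -/
def coherent {V : Finset ℕ} (M : ProbModel V) (E : Finset CPL) (pr : CPL → ℚ) : Prop :=
  ∀ ψ ∈ E, M.μ (truthSet V ψ) = (pr ψ : ℝ)

/-- Conditional probability `Pr_μ(φ | χ) = μ(‖φ∧χ‖)/μ(‖χ‖)`. -/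
noncomputable def condProb {V : Finset ℕ} (M : ProbModel V) (φ χ : CPL) : ℝ :=
  M.μ (truthSet V (CPL.and φ χ)) / M.μ (truthSet V χ)

/-- `τ` is a solution to the PrAP `⟨{φ}, χ, H, E, pr⟩`: an `L_CPL`-term composed of
literals from `H` s.t. `φ, τ ⊨_CPL χ` and some probabilistic model coherent with `pr`
gives `μ(‖φ∧τ‖) > 0`. -/
def IsPrAPSolution (φ χ : CPL) (H E : Finset CPL) (pr : CPL → ℚ) (τ : CPL) : Prop :=
  CPL.IsTerm τ ∧ τ.lits ⊆ H ∧
  (∀ v, CPL.eval v φ = true → CPL.eval v τ = true → CPL.eval v χ = true) ∧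
  ∃ M : ProbModel (φ.vars ∪ χ.vars),
    coherent M E pr ∧ 0 < M.μ (truthSet (φ.vars ∪ χ.vars) (CPL.and φ τ))

/-- `τ` is a preferred solution: a solution s.t. for every other solution `σ` there is
a probabilistic model coherent with `pr` with `μ(‖τ‖) ≥ μ(‖σ‖)`. -/
def IsPreferredPrAPSolution (φ χ : CPL) (H E : Finset CPL) (pr : CPL → ℚ) (τ : CPL) : Prop :=
  IsPrAPSolution φ χ H E pr τ ∧
  ∀ σ, IsPrAPSolution φ χ H E pr σ → σ ≠ τ →
    ∃ M : ProbModel (φ.vars ∪ χ.vars),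
      coherent M E pr ∧
      M.μ (truthSet (φ.vars ∪ χ.vars) σ) ≤ M.μ (truthSet (φ.vars ∪ χ.vars) τ)

/-- The FP-counterpart `Ξ_p = {Pr(ψ)≈c̄ : ψ ∈ E, p(ψ) = c}` of a value assignment,
where `Pr(ψ)≈c̄` abbreviates `(Pr(ψ)≥c̄) ⊙ (Pr(ψ)≤c̄)`. -/
def XiP (E : Finset CPL) (pr : CPL → ℚ) : Finset FP :=
  E.image (fun ψ => FP.conj (FP.probIneq ψ .ge (pr ψ)) (FP.probIneq ψ .le (pr ψ)))

/-- The next weakest PIL `λ^♭_𝒱` of the PIL `Pr(τ)◇(k/n)`. -/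
def flatPIL (n : ℕ) (τ : CPL) (d : Ineq) (k : ℕ) : FP :=
  match d with
  | .ge => FP.probIneq τ .gt (((k : ℚ) - 1) / (n : ℚ))
  | .gt => FP.probIneq τ .ge ((k : ℚ) / (n : ℚ))
  | .le => FP.probIneq τ .lt (((k : ℚ) + 1) / (n : ℚ))
  | .lt => FP.probIneq τ .le ((k : ℚ) / (n : ℚ))

/-- The theory `Ψ_Γ = Γ^↑ ∪ {p_φ → p_χ : φ, χ ∈ E[Γ], φ ⊨_CPL χ}`. -/
def PsiGamma (Γ : Finset FP) (e : CPL → ℕ) : Set Luk :=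
  (fun α => FP.outer e α) '' (↑Γ : Set FP) ∪
  {ψ | ∃ φ ∈ Γ.sup FP.events, ∃ χ ∈ Γ.sup FP.events,
        CPL.Entails φ χ ∧ ψ = Luk.impl (.var (e φ)) (.var (e χ))}

/-- The conjunction `hd ∧ ⋀_{q ∈ s} q`. -/
def conjVarsFrom (hd : CPL) (s : Finset ℕ) : CPL :=
  (s.sort (· ≤ ·)).foldl (fun acc q => CPL.and acc (CPL.var q)) hd
section Aux15

lemma eval_congr15 (v v' : ℕ → Bool) (ψ : CPL) (h : ∀ p ∈ ψ.vars, v p = v' p) :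
    CPL.eval v ψ = CPL.eval v' ψ := by
  induction ψ with
  | var p => exact h p (by simp [CPL.vars])
  | neg φ ih => simp only [CPL.eval]; rw [ih (fun p hp => h p (by simpa [CPL.vars] using hp))]
  | and φ χ ih1 ih2 =>
      simp only [CPL.eval]
      rw [ih1 (fun p hp => h p (by simp [CPL.vars, hp])),
        ih2 (fun p hp => h p (by simp [CPL.vars, hp]))]
  | or φ χ ih1 ih2 =>
      simp only [CPL.eval]
      rw [ih1 (fun p hp => h p (by simp [CPL.vars, hp])),
        ih2 (fun p hp => h p (by simp [CPL.vars, hp]))]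

/-- Pushforward of a probabilistic model along a map of worlds. -/
def ProbModel.comap15 {V V' : Finset ℕ} (M : ProbModel V) (f : World V → World V') :
    ProbModel V' where
  μ A := M.μ (f ⁻¹' A)
  nonneg A := M.nonneg _
  le_one A := M.le_one _
  m_univ := by simpa using M.m_univ
  m_empty := by simpa using M.m_empty
  m_add A B hAB := by
    show M.μ (f ⁻¹' (A ∪ B)) = M.μ (f ⁻¹' A) + M.μ (f ⁻¹' B)
    rw [Set.preimage_union]
    exact M.m_add _ _ (hAB.preimage f)

lemma comap15_truthSet {V V' : Finset ℕ} (M : ProbModel V) (f : World V → World V')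
    (ψ : CPL) (hf : ∀ w : World V, ∀ p ∈ ψ.vars, (p ∈ (f w).1 ↔ p ∈ w.1)) :
    (M.comap15 f).μ (truthSet V' ψ) = M.μ (truthSet V ψ) := by
  have hset : f ⁻¹' (truthSet V' ψ) = truthSet V ψ := by
    ext w
    simp only [truthSet, Set.mem_preimage, Set.mem_setOf_eq, CPL.evalSet]
    rw [eval_congr15 _ _ ψ (fun p hp => decide_eq_decide.mpr (hf w p hp))]
  show M.μ (f ⁻¹' truthSet V' ψ) = _
  rw [hset]

lemma ProbModel.mono15 {V : Finset ℕ} (M : ProbModel V) {A B : Set (World V)}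
    (h : A ⊆ B) : M.μ A ≤ M.μ B := by
  have hd : Disjoint A (B \ A) := disjoint_sdiff_self_right
  have hU : A ∪ B \ A = B := Set.union_diff_cancel h
  calc M.μ A ≤ M.μ A + M.μ (B \ A) := le_add_of_nonneg_right (M.nonneg _)
    _ = M.μ (A ∪ B \ A) := (M.m_add _ _ hd).symm
    _ = M.μ B := by rw [hU]

/-- Point mass at a world. -/
noncomputable def dirac15 {V : Finset ℕ} (w : World V) : ProbModel V where
  μ A := if w ∈ A then 1 else 0
  nonneg A := by show (0:ℝ) ≤ if w ∈ A then 1 else 0; split <;> norm_num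
  le_one A := by show (if w ∈ A then (1:ℝ) else 0) ≤ 1; split <;> norm_num
  m_univ := by simp
  m_empty := by simp
  m_add A B h := by
    by_cases hA : w ∈ A <;> by_cases hB : w ∈ B
    · exact absurd hB (Set.disjoint_left.mp h hA)
    all_goals simp [Set.mem_union, hA, hB]

lemma interp_approx15 {V : Finset ℕ} (M : ProbModel V) (ψ : CPL) (c : ℚ) :
    FP.interp M (FP.conj (FP.probIneq ψ .ge c) (FP.probIneq ψ .le c)) = 1 ↔
      M.μ (truthSet V ψ) = (c : ℝ) := by
  simp only [FP.interp, Ineq.holds, ge_iff_le]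
  by_cases h1 : (c:ℝ) ≤ M.μ (truthSet V ψ) <;> by_cases h2 : M.μ (truthSet V ψ) ≤ (c:ℝ) <;>
    simp only [h1, h2, ↓reduceIte]
  · constructor
    · intro _; exact le_antisymm h2 h1
    · intro _; norm_num
  · constructor
    · intro h; norm_num at h
    · intro h; exact absurd h.le h2
  · constructor
    · intro h; norm_num at h
    · intro h; exact absurd h.ge h1
  · constructor
    · intro h; norm_num at h
    · intro h; exact absurd h.ge h1

lemma interp_pos15 {V : Finset ℕ} (M : ProbModel V) (ψ : CPL) :
    FP.interp M (FP.neg (FP.delta (FP.neg (FP.prob ψ)))) = 1 ↔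
      0 < M.μ (truthSet V ψ) := by
  simp only [FP.interp]
  split_ifs with h
  · norm_num
    linarith
  · norm_num
    rcases (M.nonneg (truthSet V ψ)).lt_or_eq with h' | h'
    · exact h'.le
    · exact absurd (by linarith : (1 : ℝ) - M.μ (truthSet V ψ) = 1) h

lemma interp_impl15 {V : Finset ℕ} (M : ProbModel V) (φ χ : CPL) :
    FP.interp M (FP.impl (FP.prob φ) (FP.prob χ)) = 1 ↔
      M.μ (truthSet V φ) ≤ M.μ (truthSet V χ) := by
  simp only [FP.interp]
  constructor
  · intro h
    by_contra hc
    push_neg at hc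
    have hlt : min 1 (1 - M.μ (truthSet V φ) + M.μ (truthSet V χ)) < 1 :=
      lt_of_le_of_lt (min_le_right _ _) (by linarith)
    rw [h] at hlt; exact lt_irrefl _ hlt
  · intro h
    exact min_eq_left (by linarith)

lemma lits_and15 (φ χ : CPL) : (CPL.and φ χ).lits = φ.lits ∪ χ.lits := by
  ext l
  simp only [CPL.lits, CPL.posVars, CPL.negVars, Finset.image_union, Finset.mem_union]
  tauto

lemma term_vars_subset15 (τ : CPL) (hτ : CPL.IsTerm τ) :
    τ.vars ⊆ τ.lits.sup CPL.vars := by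
  induction hτ with
  | lit h =>
      rcases h with ⟨p, rfl⟩ | ⟨p, rfl⟩ <;>
        simp [CPL.vars, CPL.lits, CPL.posVars, CPL.negVars]
  | conj h1 h2 ih1 ih2 =>
      rw [lits_and15, Finset.sup_union]
      exact Finset.union_subset (ih1.trans le_sup_left) (ih2.trans le_sup_right)

end Aux15

/-- For a PrAP `P_p = ⟨{φ}, χ, H, E, pr⟩` and an `L_CPL`-term `τ` composed
of literals from `H`: `τ` is a solution to `P_p` iff `Ξ_p ∪ {¬△¬Pr(φ∧τ)}` is
FP-satisfiable and `FP ⊨ Pr(φ∧τ) → Pr(χ)`. -/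
theorem stmt15 (φ χ : CPL) (H E : Finset CPL) (pr : CPL → ℚ)
    (hH : ∀ l ∈ H, CPL.IsLiteral l)
    (hHv : H.sup CPL.vars ⊆ φ.vars ∪ χ.vars)
    (hEv : E.sup CPL.vars ⊆ φ.vars ∪ χ.vars)
    (hpr : ∀ ψ ∈ E, 0 ≤ pr ψ ∧ pr ψ ≤ 1)
    (τ : CPL) (hτ : CPL.IsTerm τ) (hτH : τ.lits ⊆ H) :
    IsPrAPSolution φ χ H E pr τ ↔
      (FP.SetSatisfiable
          (insert (FP.neg (FP.delta (FP.neg (FP.prob (CPL.and φ τ))))) (XiP E pr)) ∧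
        FP.Valid (FP.impl (FP.prob (CPL.and φ τ)) (FP.prob χ))) := by
  classical
  set Vf := φ.vars ∪ χ.vars with hVf
  set α := FP.neg (FP.delta (FP.neg (FP.prob (CPL.and φ τ)))) with hα
  set Γ := insert α (XiP E pr) with hΓ
  have hαΓ : α ∈ Γ := by rw [hΓ]; exact Finset.mem_insert_self _ _
  have hgΓ : ∀ ψ ∈ E,
      FP.conj (FP.probIneq ψ .ge (pr ψ)) (FP.probIneq ψ .le (pr ψ)) ∈ Γ := by
    intro ψ hψ
    rw [hΓ]
    exact Finset.mem_insert_of_mem (Finset.mem_image_of_mem _ hψ)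
  have hτv : τ.vars ⊆ Vf :=
    (term_vars_subset15 τ hτ).trans ((Finset.sup_mono hτH).trans hHv)
  have hφτΓ : (CPL.and φ τ).vars ⊆ FP.varsSet Γ := by
    have h := Finset.le_sup (f := FP.vars) hαΓ
    intro p hp
    exact h (by simp [hα, FP.vars, hp])
  have hEΓ : ∀ ψ ∈ E, ψ.vars ⊆ FP.varsSet Γ := by
    intro ψ hψ
    have h := Finset.le_sup (f := FP.vars) (hgΓ ψ hψ)
    intro p hp
    exact h (by simp [FP.vars, hp])
  have hVΓ : FP.varsSet Γ ⊆ Vf := by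
    intro p hp
    rw [FP.varsSet] at hp
    obtain ⟨γ, hγ, hpγ⟩ := Finset.mem_sup.mp hp
    rw [hΓ] at hγ
    rcases Finset.mem_insert.mp hγ with rfl | hγ'
    · have : p ∈ φ.vars ∪ τ.vars := by simpa [hα, FP.vars, CPL.vars] using hpγ
      rcases Finset.mem_union.mp this with h | h
      · exact Finset.mem_union_left _ h
      · exact hτv h
    · obtain ⟨ψ, hψE, rfl⟩ := Finset.mem_image.mp hγ'
      have hpv : p ∈ ψ.vars := by simpa [FP.vars] using hpγ
      exact hEv (Finset.mem_sup.mpr ⟨ψ, hψE, hpv⟩)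
  constructor
  · rintro ⟨-, -, hent, M, hcoh, hpos⟩
    constructor
    · -- FP-satisfiability of Γ
      set f : World Vf → World (FP.varsSet Γ) :=
        fun w => ⟨w.1 ∩ FP.varsSet Γ, Finset.inter_subset_right⟩ with hfdef
      have htr : ∀ ψ : CPL, ψ.vars ⊆ FP.varsSet Γ →
          (M.comap15 f).μ (truthSet (FP.varsSet Γ) ψ) = M.μ (truthSet Vf ψ) := by
        intro ψ hψ
        apply comap15_truthSet
        intro w p hp
        rw [hfdef]
        simp only [Finset.mem_inter]
        exact ⟨fun h => h.1, fun h => ⟨h, hψ hp⟩⟩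
      refine ⟨M.comap15 f, ?_⟩
      intro γ hγ
      rw [hΓ] at hγ
      rcases Finset.mem_insert.mp hγ with rfl | hγ'
      · rw [hα, interp_pos15, htr _ hφτΓ]
        exact hpos
      · obtain ⟨ψ, hψE, rfl⟩ := Finset.mem_image.mp hγ'
        rw [interp_approx15, htr _ (hEΓ ψ hψE)]
        exact hcoh ψ hψE
    · -- FP-validity of Pr(φ∧τ) → Pr(χ)
      intro M'
      rw [interp_impl15]
      apply M'.mono15
      intro w hw
      simp only [truthSet, Set.mem_setOf_eq, CPL.evalSet, CPL.eval,
        Bool.and_eq_true] at hw ⊢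
      exact hent _ hw.1 hw.2
  · rintro ⟨hsat, hval⟩
    obtain ⟨M', hM'⟩ := hsat
    refine ⟨hτ, hτH, ?_, ?_⟩
    · -- classical entailment φ, τ ⊨ χ
      intro v hφv hτv'
      by_contra hχv
      set Vi : Finset ℕ := (FP.impl (FP.prob (CPL.and φ τ)) (FP.prob χ)).vars with hVi
      set w₀ : World Vi := ⟨Vi.filter (fun p => v p = true), Finset.filter_subset _ _⟩
        with hw₀
      have hval' := hval (dirac15 w₀)
      rw [interp_impl15] at hval'
      have hkey : ∀ ψ : CPL, ψ.vars ⊆ Vi → CPL.evalSet w₀.1 ψ = CPL.eval v ψ := by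
        intro ψ hψ
        show CPL.eval (fun p => decide (p ∈ w₀.1)) ψ = CPL.eval v ψ
        apply eval_congr15
        intro p hp
        have hpVi : p ∈ Vi := hψ hp
        rw [hw₀]
        cases hvp : v p <;> simp [Finset.mem_filter, hpVi, hvp]
      have hViφτ : (CPL.and φ τ).vars ⊆ Vi := by
        rw [hVi]; simp only [FP.vars]; exact Finset.subset_union_left
      have hViχ : χ.vars ⊆ Vi := by
        rw [hVi]; simp only [FP.vars]; exact Finset.subset_union_right
      have h1 : w₀ ∈ truthSet Vi (CPL.and φ τ) := by
        simp only [truthSet, Set.mem_setOf_eq]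
        rw [hkey _ hViφτ]
        simp [CPL.eval, hφv, hτv']
      have h2 : w₀ ∉ truthSet Vi χ := by
        simp only [truthSet, Set.mem_setOf_eq]
        rw [hkey _ hViχ]
        exact hχv
      have e1 : (dirac15 w₀).μ (truthSet Vi (CPL.and φ τ)) = 1 := by
        simp [dirac15, h1]
      have e2 : (dirac15 w₀).μ (truthSet Vi χ) = 0 := by
        simp [dirac15, h2]
      rw [e1, e2] at hval'
      linarith
    · -- existence of a coherent model with positive mass
      set f : World (FP.varsSet Γ) → World Vf := fun w => ⟨w.1, w.2.trans hVΓ⟩ with hfdef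
      have htr : ∀ ψ : CPL, (M'.comap15 f).μ (truthSet Vf ψ) =
          M'.μ (truthSet (FP.varsSet Γ) ψ) := by
        intro ψ
        apply comap15_truthSet
        intro w p hp
        rw [hfdef]
      refine ⟨M'.comap15 f, ?_, ?_⟩
      · intro ψ hψ
        rw [htr]
        exact (interp_approx15 M' ψ (pr ψ)).mp (hM' _ (hgΓ ψ hψ))
      · rw [htr]
        have h := hM' α hαΓ
        rw [hα] at h
        exact (interp_pos15 M' (CPL.and φ τ)).mp h
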